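/- Let m ≥ 2 and let C_{k,n} be the coefficients of the polynomials p_{λ,k} from differentiating e^{λ x^m/m}, so p_{λ,k}(x) = Σ_n λ^{k-n} x^{(m-1)k-nm} C_{k,n}. Then for every k ≥ 2, C_{k,1} = (m-1)k(k-1)/2. -/

import Mathlib

theorem coefficient_n_one (m : ℕ) (hm : 2 ≤ m) (lam : ℂ) (hlam : lam ≠ 0)
    (p : ℕ → Polynomial ℂ) (hp0 : p 0 = 1)
    (hprec : ∀ k, p (k + 1) =
      Polynomial.C lam * Polynomial.X ^ (m - 1) * p k + Polynomial.derivative (p k))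
    (C : ℕ → ℕ → ℕ)
    (hC : ∀ k : ℕ, 1 ≤ k →
      p k = ∑ n ∈ Finset.range (k * (m - 1) / m + 1),
        Polynomial.C (lam ^ (k - n) * (C k n : ℂ)) * Polynomial.X ^ ((m - 1) * k - n * m)) :
    ∀ k : ℕ, 2 ≤ k → C k 1 = (m - 1) * k * (k - 1) / 2 := by
  -- coefficient extraction from hC
  have key : ∀ k n₀ : ℕ, 1 ≤ k → n₀ ≤ k * (m - 1) / m →
      (p k).coeff ((m - 1) * k - n₀ * m) = lam ^ (k - n₀) * (C k n₀ : ℂ) := by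
    intro k n₀ hk hn₀
    rw [hC k hk, Polynomial.finset_sum_coeff, Finset.sum_eq_single n₀]
    · rw [Polynomial.coeff_C_mul, Polynomial.coeff_X_pow, if_pos rfl, mul_one]
    · intro n hn hne
      rw [Polynomial.coeff_C_mul, Polynomial.coeff_X_pow, if_neg, mul_zero]
      have hnr : n ≤ k * (m - 1) / m := by
        have := Finset.mem_range.mp hn; omega
      have h1 : n * m ≤ (m - 1) * k := by
        calc n * m ≤ (k * (m - 1) / m) * m := Nat.mul_le_mul_right _ hnr
          _ ≤ k * (m - 1) := Nat.div_mul_le_self _ _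
          _ = (m - 1) * k := Nat.mul_comm _ _
      have h2 : n₀ * m ≤ (m - 1) * k := by
        calc n₀ * m ≤ (k * (m - 1) / m) * m := Nat.mul_le_mul_right _ hn₀
          _ ≤ k * (m - 1) := Nat.div_mul_le_self _ _
          _ = (m - 1) * k := Nat.mul_comm _ _
      intro heq
      apply hne
      have h3 : n * m = n₀ * m := by omega
      exact Nat.eq_of_mul_eq_mul_right (by omega) h3
    · intro h
      exact absurd (Finset.mem_range.mpr (by omega)) h
  -- vanishing above the degree
  have vanish : ∀ k j : ℕ, 1 ≤ k → (m - 1) * k < j → (p k).coeff j = 0 := by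
    intro k j hk hj
    rw [hC k hk, Polynomial.finset_sum_coeff]
    apply Finset.sum_eq_zero
    intro n _
    rw [Polynomial.coeff_C_mul, Polynomial.coeff_X_pow, if_neg (by omega), mul_zero]
  -- p 1
  have hp1 : p 1 = Polynomial.C lam * Polynomial.X ^ (m - 1) := by
    rw [hprec 0, hp0]; simp
  -- C k 0 = 1
  have hC0 : ∀ k, 1 ≤ k → C k 0 = 1 := by
    intro k hk
    induction k with
    | zero => omega
    | succ k ih =>
      rcases Nat.lt_or_ge k 1 with h1 | h1
      · -- k = 0
        have hk0 : k = 0 := by omega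
        subst hk0
        have h := key 1 0 le_rfl (Nat.zero_le _)
        rw [hp1] at h
        simp only [Nat.mul_one, Nat.zero_mul, Nat.sub_zero, Polynomial.coeff_C_mul,
          Polynomial.coeff_X_pow, if_pos rfl, mul_one, pow_one] at h
        have : (C 1 0 : ℂ) = 1 := by
          field_simp at h
          simp only [if_true] at h
          exact_mod_cast h.symm
        exact_mod_cast this
      · -- step, k ≥ 1
        have hidx : (m - 1) * (k + 1) = (m - 1) * k + (m - 1) := by ring
        have hL := key (k + 1) 0 (by omega) (Nat.zero_le _)
        simp only [Nat.zero_mul, Nat.sub_zero] at hL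
        have hR := congrArg (fun q => Polynomial.coeff q ((m - 1) * (k + 1))) (hprec k)
        simp only [Polynomial.coeff_add, Polynomial.coeff_derivative, mul_assoc,
          Polynomial.coeff_C_mul] at hR
        rw [hidx, Polynomial.coeff_X_pow_mul] at hR
        rw [vanish k ((m - 1) * k + (m - 1) + 1) h1
          (Nat.lt_succ_of_le (Nat.le_add_right _ _)), zero_mul, add_zero] at hR
        have hk0 : (p k).coeff ((m - 1) * k) = lam ^ k := by
          have h := key k 0 h1 (Nat.zero_le _)
          simp only [Nat.zero_mul, Nat.sub_zero] at h
          rw [h, ih h1]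
          simp
        rw [← hidx, hL, hk0] at hR
        have hcast : (C (k + 1) 0 : ℂ) = 1 := by
          have hpow : lam ^ (k + 1) ≠ 0 := pow_ne_zero _ hlam
          have : lam ^ (k + 1) * (C (k + 1) 0 : ℂ) = lam ^ (k + 1) * 1 := by
            rw [hR]; ring
          exact mul_left_cancel₀ hpow this
        exact_mod_cast hcast
  -- auxiliary inequalities
  have hdiv1 : ∀ k, 2 ≤ k → 1 ≤ k * (m - 1) / m := by
    intro k hk
    rw [Nat.le_div_iff_mul_le (by omega : 0 < m)]
    have : 2 * (m - 1) ≤ k * (m - 1) := Nat.mul_le_mul_right _ hk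
    omega
  have hmk : ∀ k, 2 ≤ k → m ≤ (m - 1) * k := by
    intro k hk
    calc m ≤ (m - 1) * 2 := by omega
      _ ≤ (m - 1) * k := Nat.mul_le_mul_left _ hk
  -- base: C 2 1 = m - 1
  have hbase : C 2 1 = m - 1 := by
    have hp2 : p 2 = Polynomial.C (lam * lam) * Polynomial.X ^ ((m - 1) + (m - 1)) +
        Polynomial.C lam * (Polynomial.C ((m - 1 : ℕ) : ℂ) * Polynomial.X ^ (m - 1 - 1)) := by
      rw [hprec 1, hp1, Polynomial.derivative_C_mul, Polynomial.derivative_X_pow,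
        Polynomial.C_mul]
      ring
    have hL := key 2 1 (by omega) (hdiv1 2 le_rfl)
    have hidx : (m - 1) * 2 - 1 * m = m - 2 := by omega
    rw [hidx, hp2] at hL
    simp only [Polynomial.coeff_add, Polynomial.coeff_C_mul, Polynomial.coeff_X_pow] at hL
    rw [if_neg (by omega), if_pos (by omega)] at hL
    simp only [mul_zero, mul_one, zero_add] at hL
    rw [show lam ^ (2 - 1) = lam by norm_num] at hL
    have : ((m - 1 : ℕ) : ℂ) = (C 2 1 : ℂ) := mul_left_cancel₀ hlam hL
    exact_mod_cast this.symm
  -- recurrence: C (k+1) 1 = C k 1 + (m-1)*k for k ≥ 2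
  have hrec : ∀ k, 2 ≤ k → C (k + 1) 1 = C k 1 + (m - 1) * k := by
    intro k hk
    have hmk' := hmk k hk
    have hidx1 : (m - 1) * (k + 1) = (m - 1) * k + (m - 1) := by ring
    have hd : (m - 1) * (k + 1) - 1 * m = (m - 1) * k - 1 := by omega
    have hd2 : (m - 1) * k - 1 = ((m - 1) * k - m) + (m - 1) := by omega
    have hd3 : ((m - 1) * k - 1) + 1 = (m - 1) * k := by omega
    -- LHS
    have hL := key (k + 1) 1 (by omega) (hdiv1 (k + 1) (by omega))
    rw [hd] at hL
    -- RHS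
    have hR := congrArg (fun q => Polynomial.coeff q ((m - 1) * k - 1)) (hprec k)
    simp only [Polynomial.coeff_add, Polynomial.coeff_derivative, mul_assoc,
      Polynomial.coeff_C_mul] at hR
    rw [hd2, Polynomial.coeff_X_pow_mul, ← hd2, hd3] at hR
    have hk1 : (p k).coeff ((m - 1) * k - m) = lam ^ (k - 1) * (C k 1 : ℂ) := by
      have := key k 1 (by omega) (hdiv1 k hk)
      rwa [one_mul] at this
    have hk0 : (p k).coeff ((m - 1) * k) = lam ^ k := by
      have := key k 0 (by omega) (Nat.zero_le _)
      simp only [Nat.zero_mul, Nat.sub_zero] at this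
      rw [this, hC0 k (by omega)]
      simp
    rw [hk1, hk0] at hR
    rw [hL] at hR
    -- hR : lam ^ (k+1-1) * C (k+1) 1 = lam * (lam^(k-1) * C k 1) + lam^k * ((m-1)*k - 1 + 1)
    have hcast : (C (k + 1) 1 : ℂ) = (C k 1 : ℂ) + (((m - 1) * k : ℕ) : ℂ) := by
      have hpow : lam ^ k ≠ 0 := pow_ne_zero _ hlam
      apply mul_left_cancel₀ hpow
      have e1 : k + 1 - 1 = k := by omega
      have e2 : lam * lam ^ (k - 1) = lam ^ k := by
        rw [← pow_succ']
        congr 1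
        omega
      have e3 : (((m - 1) * k - 1 : ℕ) : ℂ) + 1 = (((m - 1) * k : ℕ) : ℂ) := by
        rw [← Nat.cast_add_one, hd3]
      rw [e1] at hR
      rw [hR, e3, ← mul_assoc, e2]
      push_cast
      ring
    exact_mod_cast hcast
  -- put it together
  have main : ∀ k, 2 ≤ k → 2 * C k 1 = (m - 1) * k * (k - 1) := by
    intro k hk
    induction k with
    | zero => omega
    | succ k ih =>
      rcases Nat.lt_or_ge k 2 with h1 | h1
      · have hk2 : k = 1 := by omega
        subst hk2
        rw [hbase]
        omega
      · obtain ⟨b, rfl⟩ : ∃ b, k = b + 2 := ⟨k - 2, by omega⟩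
        have hb1 : b + 2 - 1 = b + 1 := by omega
        have hb2 : b + 2 + 1 - 1 = b + 2 := by omega
        rw [hb2, hrec (b + 2) (by omega), Nat.mul_add, ih (by omega), hb1]
        ring
  intro k hk
  have h := main k hk
  have h2 : C k 1 = (m - 1) * k * (k - 1) / 2 := by
    generalize hP : (m - 1) * k * (k - 1) = P at h ⊢
    omega
  exact h2
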